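/- If x ∼ D_{L−c,σ₀} is a discrete Gaussian over a shifted n-dimensional lattice L − c, then P(‖x‖ > √(2πn)·σ₀) < ((1+ε_L(σ₀))/(1−ε_L(σ₀)))·2^{−n}, provided ε_L(σ₀) < 1. -/

import Mathlib

open Real MeasureTheory

noncomputable section

/-- Squared Euclidean norm on `Fin n → ℝ`. -/
def sqnorm {n : ℕ} (v : Fin n → ℝ) : ℝ := ∑ i, v i ^ 2

/-- Lattice point `B z` for integer vector `z`. -/
def latp {n : ℕ} (B : Matrix (Fin n) (Fin n) ℝ) (z : Fin n → ℤ) : Fin n → ℝ :=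
  B.mulVec (fun j => (z j : ℝ))

/-- The Λ-periodic Gaussian `f_{σ,Λ}(x)`. -/
def periodicGauss {n : ℕ} (B : Matrix (Fin n) (Fin n) ℝ) (σ : ℝ) (x : Fin n → ℝ) : ℝ :=
  (2 * π * σ ^ 2) ^ (-(n : ℝ) / 2) *
    ∑' z : Fin n → ℤ, Real.exp (-(sqnorm (x - latp B z)) / (2 * σ ^ 2))

/-- The flatness factor `ε_Λ(σ) = max_x |V(Λ) f_{σ,Λ}(x) − 1|`. -/
def flatness {n : ℕ} (B : Matrix (Fin n) (Fin n) ℝ) (σ : ℝ) : ℝ :=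
  ⨆ x : Fin n → ℝ, |(|B.det|) * periodicGauss B σ x - 1|
/-- Discrete Gaussian probability over the coset `L − c` of the point `B z − c`. -/
def cosetGauss {n : ℕ} (B : Matrix (Fin n) (Fin n) ℝ) (σ₀ : ℝ) (c : Fin n → ℝ)
    (z : Fin n → ℤ) : ℝ :=
  Real.exp (-(sqnorm (latp B z - c)) / (2 * σ₀ ^ 2)) /
    ∑' w : Fin n → ℤ, Real.exp (-(sqnorm (latp B w - c)) / (2 * σ₀ ^ 2))

namespace BanaszczykAux

lemma sqnorm_nonneg {n : ℕ} (v : Fin n → ℝ) : 0 ≤ sqnorm v :=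
  Finset.sum_nonneg fun _ _ => sq_nonneg _

lemma sqnorm_sub_comm {n : ℕ} (u v : Fin n → ℝ) : sqnorm (u - v) = sqnorm (v - u) := by
  unfold sqnorm
  exact Finset.sum_congr rfl fun i _ => by simp only [Pi.sub_apply]; ring

lemma sqnorm_half_le {n : ℕ} (u v : Fin n → ℝ) :
    sqnorm u / 2 - sqnorm v ≤ sqnorm (u - v) := by
  unfold sqnorm
  rw [Finset.sum_div, ← Finset.sum_sub_distrib]
  exact Finset.sum_le_sum fun i _ => by
    simp only [Pi.sub_apply]; nlinarith [sq_nonneg (u i - 2 * v i)]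

lemma sqnorm_mulVec_le {n : ℕ} (A : Matrix (Fin n) (Fin n) ℝ) (v : Fin n → ℝ) :
    sqnorm (A.mulVec v) ≤ (∑ i, ∑ j, A i j ^ 2) * sqnorm v := by
  unfold sqnorm
  rw [Finset.sum_mul]
  refine Finset.sum_le_sum fun i _ => ?_
  have := Finset.sum_mul_sq_le_sq_mul_sq Finset.univ (fun j => A i j) v
  simpa [Matrix.mulVec, dotProduct] using this

lemma sqnorm_le_inv_mulVec {n : ℕ} {B : Matrix (Fin n) (Fin n) ℝ} (hB : B.det ≠ 0)
    (v : Fin n → ℝ) :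
    sqnorm v ≤ ((∑ i, ∑ j, (B⁻¹) i j ^ 2) + 1) * sqnorm (B.mulVec v) := by
  have h1 : (B⁻¹).mulVec (B.mulVec v) = v := by
    rw [Matrix.mulVec_mulVec, Matrix.nonsing_inv_mul B (Ne.isUnit hB), Matrix.one_mulVec]
  calc sqnorm v = sqnorm ((B⁻¹).mulVec (B.mulVec v)) := by rw [h1]
    _ ≤ (∑ i, ∑ j, (B⁻¹) i j ^ 2) * sqnorm (B.mulVec v) := sqnorm_mulVec_le _ _
    _ ≤ ((∑ i, ∑ j, (B⁻¹) i j ^ 2) + 1) * sqnorm (B.mulVec v) := by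
        have := sqnorm_nonneg (B.mulVec v); nlinarith

lemma latp_add {n : ℕ} (B : Matrix (Fin n) (Fin n) ℝ) (z w : Fin n → ℤ) :
    latp B (z + w) = latp B z + latp B w := by
  unfold latp
  have : (fun j => ((z + w) j : ℝ)) = (fun j => (z j : ℝ)) + (fun j => (w j : ℝ)) := by
    funext j; simp only [Pi.add_apply, Int.cast_add]
  rw [this, Matrix.mulVec_add]

lemma summable_exp_nat {b : ℝ} (hb : 0 < b) :
    Summable fun m : ℕ => Real.exp (-b * (m : ℝ) ^ 2) := by
  refine Summable.of_nonneg_of_le (fun m => (Real.exp_pos _).le) (fun m => ?_)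
    (summable_geometric_of_lt_one (Real.exp_pos (-b)).le
      (Real.exp_lt_one_iff.mpr (neg_lt_zero.mpr hb)))
  rw [← Real.exp_nat_mul]
  apply Real.exp_le_exp.mpr
  have h1 : (m : ℝ) ≤ (m : ℝ) ^ 2 := by
    rcases Nat.eq_zero_or_pos m with h | h
    · simp [h]
    · have : (1:ℝ) ≤ (m:ℝ) := by exact_mod_cast h
      nlinarith
  nlinarith

lemma summable_exp_int {b : ℝ} (hb : 0 < b) :
    Summable fun k : ℤ => Real.exp (-b * (k : ℝ) ^ 2) := by
  refine Summable.of_nat_of_neg ?_ ?_ <;> simpa using summable_exp_nat hb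

lemma summable_pi_prod {g : ℤ → ℝ} (hg0 : ∀ k, 0 ≤ g k) (hg : Summable g) :
    ∀ n : ℕ, Summable fun z : Fin n → ℤ => ∏ i, g (z i) := by
  intro n
  induction n with
  | zero => exact .of_finite
  | succ n ih =>
    rw [← (Fin.consEquiv (fun _ => ℤ)).summable_iff]
    have heq : ((fun z : Fin (n+1) → ℤ => ∏ i, g (z i)) ∘ (Fin.consEquiv (fun _ => ℤ)))
        = fun p : ℤ × (Fin n → ℤ) => g p.1 * ∏ i, g (p.2 i) := by
      funext p
      simp only [Function.comp_apply, Fin.consEquiv_apply, Fin.prod_univ_succ,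
        Fin.cons_zero, Fin.cons_succ]
    exact (hg.mul_of_nonneg ih (fun k => hg0 k)
      (fun z => Finset.prod_nonneg fun i _ => hg0 _)).congr
      (fun p => (congrFun heq p).symm)

lemma summable_gauss {n : ℕ} {B : Matrix (Fin n) (Fin n) ℝ} {C : ℝ} (hC : 0 < C)
    (hCb : ∀ v : Fin n → ℝ, sqnorm v ≤ C * sqnorm (B.mulVec v))
    {A : ℝ} (hA : 0 < A) (c : Fin n → ℝ) :
    Summable fun z : Fin n → ℤ => Real.exp (-(sqnorm (latp B z - c)) / A) := by
  set b : ℝ := (2 * C * A)⁻¹ with hbdef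
  have hb : 0 < b := by positivity
  refine Summable.of_nonneg_of_le (fun z => (Real.exp_pos _).le) (fun z => ?_)
    (((summable_pi_prod (fun k => (Real.exp_pos _).le) (summable_exp_int hb) n)).mul_left
      (Real.exp (sqnorm c / A)))
  have hprod : (∏ i, Real.exp (-b * ((z i : ℝ)) ^ 2))
      = Real.exp (-b * sqnorm (fun i => (z i : ℝ))) := by
    rw [← Real.exp_sum]
    congr 1
    rw [sqnorm, Finset.mul_sum]
  rw [hprod, ← Real.exp_add, Real.exp_le_exp]
  have hq : sqnorm (latp B z) / 2 - sqnorm c ≤ sqnorm (latp B z - c) := sqnorm_half_le _ _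
  have hz : sqnorm (fun i => (z i : ℝ)) ≤ C * sqnorm (latp B z) := by
    calc sqnorm (fun i => (z i : ℝ))
        ≤ C * sqnorm (B.mulVec (fun i => (z i : ℝ))) := hCb _
      _ = C * sqnorm (latp B z) := rfl
  have h1 : b * sqnorm (fun i => (z i : ℝ)) ≤ sqnorm (latp B z) / (2 * A) := by
    calc b * sqnorm (fun i => (z i : ℝ)) ≤ b * (C * sqnorm (latp B z)) := by
          exact mul_le_mul_of_nonneg_left hz hb.le
      _ = sqnorm (latp B z) / (2 * A) := by
          rw [hbdef]; field_simp
  have h2 : sqnorm (latp B z) / (2 * A) - sqnorm c / A ≤ sqnorm (latp B z - c) / A := by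
    calc sqnorm (latp B z) / (2 * A) - sqnorm c / A
        = (sqnorm (latp B z) / 2 - sqnorm c) / A := by ring
      _ ≤ sqnorm (latp B z - c) / A := by gcongr
  have h3 : -(sqnorm (latp B z - c)) / A = -(sqnorm (latp B z - c) / A) := by ring
  rw [h3]
  linarith

lemma tsum_shift {n : ℕ} (B : Matrix (Fin n) (Fin n) ℝ) (A : ℝ) (x : Fin n → ℝ)
    (w : Fin n → ℤ) :
    ∑' z : Fin n → ℤ, Real.exp (-(sqnorm (latp B z - (x + latp B w))) / A)
      = ∑' z : Fin n → ℤ, Real.exp (-(sqnorm (latp B z - x)) / A) := by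
  have key := (Equiv.addRight w).tsum_eq
    (fun z : Fin n → ℤ => Real.exp (-(sqnorm (latp B z - (x + latp B w))) / A))
  rw [← key]
  refine tsum_congr fun z => ?_
  have : latp B ((Equiv.addRight w) z) - (x + latp B w) = latp B z - x := by
    simp only [Equiv.coe_addRight, latp_add]
    abel
  rw [this]

lemma continuous_sqnorm {n : ℕ} : Continuous (sqnorm : (Fin n → ℝ) → ℝ) :=
  continuous_finset_sum _ fun i _ => (continuous_apply i).pow 2

lemma conv1d {a b : ℝ} (ha : 0 < a) (hb : 0 < b) (v : ℝ) :
    ∫ y : ℝ, Real.exp (-a * y ^ 2) * Real.exp (-b * (v - y) ^ 2)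
      = Real.sqrt (π / (a + b)) * Real.exp (-(a * b / (a + b)) * v ^ 2) := by
  have hab : 0 < a + b := by linarith
  have key : ∀ y : ℝ, Real.exp (-a * y ^ 2) * Real.exp (-b * (v - y) ^ 2)
      = Real.exp (-(a + b) * (y - b * v / (a + b)) ^ 2)
        * Real.exp (-(a * b / (a + b)) * v ^ 2) := by
    intro y
    rw [← Real.exp_add, ← Real.exp_add]
    congr 1
    field_simp
    ring
  calc ∫ y : ℝ, Real.exp (-a * y ^ 2) * Real.exp (-b * (v - y) ^ 2)
      = ∫ y : ℝ, Real.exp (-(a + b) * (y - b * v / (a + b)) ^ 2)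
          * Real.exp (-(a * b / (a + b)) * v ^ 2) := by simp only [key]
    _ = (∫ y : ℝ, Real.exp (-(a + b) * (y - b * v / (a + b)) ^ 2))
          * Real.exp (-(a * b / (a + b)) * v ^ 2) := integral_mul_const _ _
    _ = Real.sqrt (π / (a + b)) * Real.exp (-(a * b / (a + b)) * v ^ 2) := by
        rw [integral_sub_right_eq_self (fun y => Real.exp (-(a + b) * y ^ 2))
          (b * v / (a + b)), integral_gaussian]

lemma exp_sqnorm_prod {n : ℕ} (a : ℝ) (v : Fin n → ℝ) :
    Real.exp (-a * sqnorm v) = ∏ i, Real.exp (-a * (v i) ^ 2) := by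
  rw [← Real.exp_sum]
  congr 1
  rw [sqnorm, Finset.mul_sum]

lemma integrable_gauss_nd {n : ℕ} {a : ℝ} (ha : 0 < a) :
    Integrable (fun y : Fin n → ℝ => Real.exp (-a * sqnorm y)) := by
  have h : (fun y : Fin n → ℝ => Real.exp (-a * sqnorm y))
      = fun y => ∏ i, Real.exp (-a * (y i) ^ 2) := funext fun y => exp_sqnorm_prod a y
  rw [h]
  exact Integrable.fintype_prod (f := fun (_ : Fin n) (t : ℝ) => Real.exp (-a * t ^ 2))
    (fun _ => integrable_exp_neg_mul_sq ha)

lemma integral_gauss_nd {n : ℕ} {a : ℝ} (ha : 0 < a) :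
    ∫ y : Fin n → ℝ, Real.exp (-a * sqnorm y) = Real.sqrt (π / a) ^ n := by
  have h : (fun y : Fin n → ℝ => Real.exp (-a * sqnorm y))
      = fun y => ∏ i, Real.exp (-a * (y i) ^ 2) := funext fun y => exp_sqnorm_prod a y
  rw [h, integral_fintype_prod_volume_eq_pow (fun t : ℝ => Real.exp (-a * t ^ 2)),
    integral_gaussian, Fintype.card_fin]

lemma integrable_conv {n : ℕ} {a b : ℝ} (ha : 0 < a) (hb : 0 < b) (v : Fin n → ℝ) :
    Integrable (fun y : Fin n → ℝ =>
      Real.exp (-a * sqnorm y) * Real.exp (-b * sqnorm (v - y))) := by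
  have h : (fun y : Fin n → ℝ => Real.exp (-a * sqnorm y) * Real.exp (-b * sqnorm (v - y)))
      = fun y => ∏ i, (Real.exp (-a * (y i) ^ 2) * Real.exp (-b * (v i - y i) ^ 2)) := by
    funext y
    rw [exp_sqnorm_prod, exp_sqnorm_prod, ← Finset.prod_mul_distrib]
    simp [Pi.sub_apply]
  rw [h]
  refine Integrable.fintype_prod
    (f := fun (i : Fin n) (t : ℝ) => Real.exp (-a * t ^ 2) * Real.exp (-b * (v i - t) ^ 2))
    (fun i => ?_)
  refine (integrable_exp_neg_mul_sq ha).mono' ?_ ?_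
  · have hcont : Continuous fun t : ℝ =>
        Real.exp (-a * t ^ 2) * Real.exp (-b * (v i - t) ^ 2) := by
      continuity
    exact hcont.aestronglyMeasurable
  · refine Filter.Eventually.of_forall fun t => ?_
    show ‖Real.exp (-a * t ^ 2) * Real.exp (-b * (v i - t) ^ 2)‖ ≤ Real.exp (-a * t ^ 2)
    rw [Real.norm_eq_abs, abs_of_nonneg (by positivity)]
    nth_rewrite 2 [← mul_one (Real.exp (-a * t ^ 2))]
    gcongr
    exact Real.exp_le_one_iff.mpr (by nlinarith [sq_nonneg (v i - t)])

lemma conv_nd {n : ℕ} {a b : ℝ} (ha : 0 < a) (hb : 0 < b) (v : Fin n → ℝ) :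
    ∫ y : Fin n → ℝ, Real.exp (-a * sqnorm y) * Real.exp (-b * sqnorm (v - y))
      = Real.sqrt (π / (a + b)) ^ n * Real.exp (-(a * b / (a + b)) * sqnorm v) := by
  have h : (fun y : Fin n → ℝ => Real.exp (-a * sqnorm y) * Real.exp (-b * sqnorm (v - y)))
      = fun y => ∏ i, (Real.exp (-a * (y i) ^ 2) * Real.exp (-b * (v i - y i) ^ 2)) := by
    funext y
    rw [exp_sqnorm_prod, exp_sqnorm_prod, ← Finset.prod_mul_distrib]
    simp [Pi.sub_apply]
  rw [h, integral_fintype_prod_volume_eq_prod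
    (fun (i : Fin n) (t : ℝ) => Real.exp (-a * t ^ 2) * Real.exp (-b * (v i - t) ^ 2))]
  have h2 : ∀ i, (∫ t : ℝ, Real.exp (-a * t ^ 2) * Real.exp (-b * (v i - t) ^ 2))
      = Real.sqrt (π / (a + b)) * Real.exp (-(a * b / (a + b)) * (v i) ^ 2) :=
    fun i => conv1d ha hb (v i)
  rw [Finset.prod_congr rfl (fun i _ => h2 i), Finset.prod_mul_distrib,
    Finset.prod_const, Finset.card_univ, Fintype.card_fin, ← exp_sqnorm_prod]

lemma key_interchange {n : ℕ} {B : Matrix (Fin n) (Fin n) ℝ} {a b : ℝ}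
    (ha : 0 < a) (hb : 0 < b) (c : Fin n → ℝ) {M : ℝ}
    (hM : ∀ x : Fin n → ℝ,
      (∑' z : Fin n → ℤ, Real.exp (-b * sqnorm (latp B z - x))) ≤ M)
    (hsum : Summable fun z : Fin n → ℤ =>
      Real.exp (-(a * b / (a + b)) * sqnorm (latp B z - c))) :
    Real.sqrt (π / (a + b)) ^ n
        * (∑' z : Fin n → ℤ, Real.exp (-(a * b / (a + b)) * sqnorm (latp B z - c)))
      ≤ M * Real.sqrt (π / a) ^ n := by
  set f : (Fin n → ℤ) → (Fin n → ℝ) → ℝ := fun z y =>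
    Real.exp (-a * sqnorm y) * Real.exp (-b * sqnorm (latp B z - c - y)) with hfdef
  have h0 : ∀ z y, 0 ≤ f z y := fun z y => by positivity
  have hint : ∀ z, Integrable (f z) := fun z => integrable_conv ha hb (latp B z - c)
  have hval : ∀ z, (∫ y : Fin n → ℝ, f z y)
      = Real.sqrt (π / (a + b)) ^ n
        * Real.exp (-(a * b / (a + b)) * sqnorm (latp B z - c)) :=
    fun z => conv_nd ha hb (latp B z - c)
  have hmeas : ∀ z, AEStronglyMeasurable (f z) (volume : Measure (Fin n → ℝ)) := by
    intro z
    have : Continuous (f z) :=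
      (Real.continuous_exp.comp (continuous_const.mul continuous_sqnorm)).mul
        (Real.continuous_exp.comp (continuous_const.mul
          (continuous_sqnorm.comp (continuous_const.sub continuous_id))))
    exact this.aestronglyMeasurable
  have hf' : ∑' z : Fin n → ℤ, ∫⁻ y : Fin n → ℝ, ‖f z y‖₊ ≠ ⊤ := by
    have hlin : ∀ z, (∫⁻ y : Fin n → ℝ, ‖f z y‖₊)
        = ENNReal.ofReal (∫ y : Fin n → ℝ, f z y) := by
      intro z
      rw [MeasureTheory.ofReal_integral_eq_lintegral_ofReal (hint z)
        (Filter.Eventually.of_forall (h0 z))]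
      exact lintegral_congr fun y => (Real.enorm_eq_ofReal (h0 z y))
    simp_rw [hlin, hval]
    rw [← ENNReal.ofReal_tsum_of_nonneg (fun z => by positivity) (hsum.mul_left _)]
    exact ENNReal.ofReal_ne_top
  have hswap : (∫ y : Fin n → ℝ, ∑' z : Fin n → ℤ, f z y)
      = ∑' z : Fin n → ℤ, ∫ y : Fin n → ℝ, f z y :=
    integral_tsum hmeas hf'
  have hinner : ∀ y : Fin n → ℝ, (∑' z : Fin n → ℤ, f z y)
      = Real.exp (-a * sqnorm y)
        * ∑' z : Fin n → ℤ, Real.exp (-b * sqnorm (latp B z - (c + y))) := by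
    intro y
    rw [← tsum_mul_left]
    exact tsum_congr fun z => by show Real.exp _ * Real.exp _ = _; rw [sub_sub]
  calc Real.sqrt (π / (a + b)) ^ n
        * (∑' z : Fin n → ℤ, Real.exp (-(a * b / (a + b)) * sqnorm (latp B z - c)))
      = ∑' z : Fin n → ℤ, ∫ y : Fin n → ℝ, f z y := by
        rw [← tsum_mul_left]; exact tsum_congr fun z => (hval z).symm
    _ = ∫ y : Fin n → ℝ, ∑' z : Fin n → ℤ, f z y := hswap.symm
    _ = ∫ y : Fin n → ℝ, Real.exp (-a * sqnorm y)
          * ∑' z : Fin n → ℤ, Real.exp (-b * sqnorm (latp B z - (c + y))) := by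
        exact integral_congr_ae (Filter.Eventually.of_forall fun y => hinner y)
    _ ≤ ∫ y : Fin n → ℝ, Real.exp (-a * sqnorm y) * M := by
        refine integral_mono_of_nonneg (Filter.Eventually.of_forall fun y => ?_)
          ((integrable_gauss_nd ha).mul_const M) (Filter.Eventually.of_forall fun y => ?_)
        · exact mul_nonneg (Real.exp_pos _).le
            (tsum_nonneg fun z => (Real.exp_pos _).le)
        · exact mul_le_mul_of_nonneg_left (hM (c + y)) (Real.exp_pos _).le
    _ = M * Real.sqrt (π / a) ^ n := by
        rw [integral_mul_const, integral_gauss_nd ha, mul_comm]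

lemma exists_unif_bound {n : ℕ} {B : Matrix (Fin n) (Fin n) ℝ} {C : ℝ} (hC : 0 < C)
    (hCb : ∀ v : Fin n → ℝ, sqnorm v ≤ C * sqnorm (B.mulVec v))
    (hB : B.det ≠ 0) {σ₀ : ℝ} (hσ₀ : 0 < σ₀) :
    ∃ Mu : ℝ, ∀ x : Fin n → ℝ,
      (∑' z : Fin n → ℤ, Real.exp (-(sqnorm (latp B z - x)) / (2 * σ₀ ^ 2))) ≤ Mu := by
  set A0 : ℝ := 2 * σ₀ ^ 2 with hA0def
  have hA0 : 0 < A0 := by positivity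
  set CB : ℝ := ∑ i, ∑ j, B i j ^ 2 with hCBdef
  have hCB : 0 ≤ CB :=
    Finset.sum_nonneg fun i _ => Finset.sum_nonneg fun j _ => sq_nonneg _
  set D2 : ℝ := CB * n + 1 with hD2def
  have hD2 : 0 < D2 := by positivity
  refine ⟨Real.exp (D2 / A0) *
    ∑' z : Fin n → ℤ, Real.exp (-(sqnorm (latp B z - 0)) / (2 * A0)), fun x => ?_⟩
  -- decompose x
  set u : Fin n → ℝ := (B⁻¹).mulVec x with hudef
  set w : Fin n → ℤ := fun i => ⌊u i⌋ with hwdef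
  set r : Fin n → ℝ := u - fun i => ((w i : ℝ)) with hrdef
  have hx : x = B.mulVec r + latp B w := by
    have : B.mulVec r + latp B w = B.mulVec (r + fun i => ((w i : ℝ))) := by
      rw [Matrix.mulVec_add]; rfl
    rw [this]
    have hru : r + (fun i => ((w i : ℝ))) = u := by
      funext i; simp [hrdef]
    rw [hru, hudef, Matrix.mulVec_mulVec, Matrix.mul_nonsing_inv B (Ne.isUnit hB),
      Matrix.one_mulVec]
  have hrb : sqnorm r ≤ (n : ℝ) := by
    have : ∀ i : Fin n, (r i) ^ 2 ≤ 1 := by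
      intro i
      have h1 : r i = u i - (⌊u i⌋ : ℝ) := rfl
      rw [h1]
      nlinarith [Int.floor_le (u i), Int.lt_floor_add_one (u i)]
    calc sqnorm r ≤ ∑ _i : Fin n, (1:ℝ) := Finset.sum_le_sum fun i _ => this i
      _ = (n : ℝ) := by simp
  have hyb : sqnorm (B.mulVec r) ≤ D2 := by
    calc sqnorm (B.mulVec r) ≤ CB * sqnorm r := sqnorm_mulVec_le B r
      _ ≤ CB * n := by exact mul_le_mul_of_nonneg_left hrb hCB
      _ ≤ D2 := by rw [hD2def]; linarith
  have hper : (∑' z : Fin n → ℤ, Real.exp (-(sqnorm (latp B z - x)) / A0))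
      = ∑' z : Fin n → ℤ, Real.exp (-(sqnorm (latp B z - B.mulVec r)) / A0) := by
    rw [hx]
    exact tsum_shift B A0 (B.mulVec r) w
  rw [hper]
  rw [← tsum_mul_left]
  refine Summable.tsum_le_tsum (fun z => ?_) (summable_gauss hC hCb hA0 _)
    ((summable_gauss hC hCb (by positivity : (0:ℝ) < 2 * A0) 0).mul_left _)
  rw [← Real.exp_add, Real.exp_le_exp]
  have hq : sqnorm (latp B z) / 2 - sqnorm (B.mulVec r) ≤ sqnorm (latp B z - B.mulVec r) :=
    sqnorm_half_le _ _
  have h0 : sqnorm (latp B z - 0) = sqnorm (latp B z) := by rw [sub_zero]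
  rw [h0]
  have key : sqnorm (latp B z) / 2 - D2 ≤ sqnorm (latp B z - B.mulVec r) := by linarith
  have e1 : -(sqnorm (latp B z - B.mulVec r)) / A0 ≤ (D2 - sqnorm (latp B z) / 2) / A0 := by
    gcongr
    linarith
  have e2 : (D2 - sqnorm (latp B z) / 2) / A0 = D2 / A0 + -(sqnorm (latp B z)) / (2 * A0) := by
    ring
  linarith

end BanaszczykAux

open BanaszczykAux

set_option maxHeartbeats 2000000 in
/-- Banaszczyk-type tail bound: the discrete Gaussian mass outside the ball of
radius `√(2πn)·σ₀` is less than `((1+ε_L(σ₀))/(1−ε_L(σ₀)))·2^{−n}`. -/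
theorem discrete_gaussian_tail (n : ℕ) (hn : 0 < n)
    (B : Matrix (Fin n) (Fin n) ℝ) (hB : B.det ≠ 0) (c : Fin n → ℝ)
    (σ₀ : ℝ) (hσ₀ : 0 < σ₀) (hflat : flatness B σ₀ < 1) :
    (∑' z : Fin n → ℤ,
        if Real.sqrt (2 * π * n) * σ₀ < Real.sqrt (sqnorm (latp B z - c)) then
          cosetGauss B σ₀ c z
        else 0) <
      ((1 + flatness B σ₀) / (1 - flatness B σ₀)) * 2 ^ (-(n : ℝ)) := by
  classical
  have hCb := sqnorm_le_inv_mulVec hB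
  have hCpos : 0 < (∑ i, ∑ j, (B⁻¹) i j ^ 2) + 1 := by positivity
  have hA0 : (0:ℝ) < 2 * σ₀ ^ 2 := by positivity
  set ε := flatness B σ₀ with hεdef
  set S : (Fin n → ℝ) → ℝ := fun x =>
    ∑' z : Fin n → ℤ, Real.exp (-(sqnorm (latp B z - x)) / (2 * σ₀ ^ 2)) with hSdef
  have hSnn : ∀ x, 0 ≤ S x := fun x => tsum_nonneg fun z => (Real.exp_pos _).le
  have hSsum : ∀ x : Fin n → ℝ, Summable (fun z : Fin n → ℤ =>
      Real.exp (-(sqnorm (latp B z - x)) / (2 * σ₀ ^ 2))) :=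
    fun x => summable_gauss hCpos hCb hA0 x
  set P : ℝ := (2 * π * σ₀ ^ 2) ^ (-(n : ℝ) / 2) with hPdef
  have hPpos : 0 < P := Real.rpow_pos_of_pos (by positivity) _
  have hpG : ∀ x, periodicGauss B σ₀ x = P * S x := by
    intro x
    unfold periodicGauss
    rw [hPdef, hSdef]
    congr 1
    exact tsum_congr fun z => by rw [sqnorm_sub_comm]
  obtain ⟨Mu, hMu⟩ := exists_unif_bound hCpos hCb hB hσ₀
  have hV : 0 < |B.det| := abs_pos.mpr hB
  have hbdd : BddAbove (Set.range fun x : Fin n → ℝ => |(|B.det|) * periodicGauss B σ₀ x - 1|) := by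
    refine ⟨|B.det| * (P * Mu) + 1, ?_⟩
    rintro t ⟨x, rfl⟩
    dsimp only
    rw [hpG x]
    have h2 : (|B.det| * P) * S x ≤ (|B.det| * P) * Mu :=
      mul_le_mul_of_nonneg_left (hMu x) (by positivity)
    have h3 : 0 ≤ (|B.det| * P) * S x :=
      mul_nonneg (by positivity) (hSnn x)
    refine abs_le.mpr ⟨by nlinarith, by nlinarith⟩
  have hflatdef : ε = ⨆ x : Fin n → ℝ, |(|B.det|) * periodicGauss B σ₀ x - 1| := rfl
  have hpt : ∀ x, |(|B.det|) * periodicGauss B σ₀ x - 1| ≤ ε := by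
    intro x
    rw [hflatdef]
    exact le_ciSup hbdd x
  have hε0 : 0 ≤ ε := le_trans (abs_nonneg _) (hpt 0)
  have hεlt : ε < 1 := hflat
  set W : ℝ := |B.det| * P with hWdef
  have hW : 0 < W := mul_pos hV hPpos
  have hup : ∀ x, S x ≤ (1 + ε) / W := by
    intro x
    have h := (abs_le.mp (hpt x)).2
    rw [hpG x] at h
    rw [le_div_iff₀ hW]
    nlinarith
  have hlo : (1 - ε) / W ≤ S c := by
    have h := (abs_le.mp (hpt c)).1
    rw [hpG c] at h
    rw [div_le_iff₀ hW]
    nlinarith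
  have h2p : (0:ℝ) < 2 * π - 1 := by nlinarith [pi_gt_d2]
  set a : ℝ := (2 * ((2 * π - 1) * σ₀ ^ 2))⁻¹ with hadef
  set b : ℝ := (2 * σ₀ ^ 2)⁻¹ with hbdef
  have ha : 0 < a := by
    rw [hadef]
    exact inv_pos.mpr (by positivity)
  have hb : 0 < b := by rw [hbdef]; positivity
  have hπ : (0:ℝ) < π := pi_pos
  have hab : a * b / (a + b) = (2 * (2 * π * σ₀ ^ 2))⁻¹ := by
    rw [hadef, hbdef]
    rw [div_eq_iff]
    · field_simp
      ring
    · have h1 : 0 < (2 * ((2 * π - 1) * σ₀ ^ 2))⁻¹ + (2 * σ₀ ^ 2)⁻¹ := by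
        have := inv_pos.mpr (by positivity : (0:ℝ) < 2 * ((2 * π - 1) * σ₀ ^ 2))
        have := inv_pos.mpr (by positivity : (0:ℝ) < 2 * σ₀ ^ 2)
        linarith
      exact ne_of_gt h1
  have hsq1 : Real.sqrt (π / a) = Real.sqrt (2 * π) * Real.sqrt (π / (a + b)) := by
    rw [← Real.sqrt_mul (by positivity : (0:ℝ) ≤ 2 * π)]
    congr 1
    rw [hadef, hbdef]
    field_simp
    have h3 : (-1 + π * 2) ≠ 0 := by linarith
    ring_nf
    field_simp
    ring
  have hA1 : (0:ℝ) < 2 * (2 * π * σ₀ ^ 2) := by positivity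
  have harg : ∀ q : ℝ, Real.exp (-(a * b / (a + b)) * q)
      = Real.exp (-q / (2 * (2 * π * σ₀ ^ 2))) := by
    intro q
    rw [hab]
    congr 1
    ring
  have hsumBig : Summable (fun z : Fin n → ℤ =>
      Real.exp (-(a * b / (a + b)) * sqnorm (latp B z - c))) := by
    refine (summable_gauss hCpos hCb hA1 c).congr fun z => ?_
    exact (harg _).symm
  have hM' : ∀ x : Fin n → ℝ,
      (∑' z : Fin n → ℤ, Real.exp (-b * sqnorm (latp B z - x))) ≤ (1 + ε) / W := by
    intro x
    have hfe : (fun z : Fin n → ℤ => Real.exp (-b * sqnorm (latp B z - x)))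
        = fun z : Fin n → ℤ => Real.exp (-(sqnorm (latp B z - x)) / (2 * σ₀ ^ 2)) := by
      funext z
      rw [hbdef]
      congr 1
      ring
    rw [hfe]
    exact hup x
  have key := key_interchange ha hb c hM' hsumBig
  have hc1 : 0 < Real.sqrt (π / (a + b)) := Real.sqrt_pos.mpr (by positivity)
  have hSbig : (∑' z : Fin n → ℤ, Real.exp (-(a * b / (a + b)) * sqnorm (latp B z - c)))
      ≤ (1 + ε) / W * Real.sqrt (2 * π) ^ n := by
    have h2 : (1 + ε) / W * Real.sqrt (π / a) ^ n
        = ((1 + ε) / W * Real.sqrt (2 * π) ^ n) * Real.sqrt (π / (a + b)) ^ n := by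
      rw [hsq1, mul_pow]; ring
    rw [h2] at key
    rw [mul_comm] at key
    exact le_of_mul_le_mul_right key (pow_pos hc1 n)
  set E : ℝ := Real.exp ((n : ℝ) * (1 / 2 - π)) with hEdef
  have hkpos : (0:ℝ) ≤ (2 * π - 1) / (2 * (2 * π * σ₀ ^ 2)) :=
    div_nonneg h2p.le (by positivity)
  have htermtail : ∀ z : Fin n → ℤ,
      (if Real.sqrt (2 * π * n) * σ₀ < Real.sqrt (sqnorm (latp B z - c)) then
          Real.exp (-(sqnorm (latp B z - c)) / (2 * σ₀ ^ 2)) else 0)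
        ≤ E * Real.exp (-(a * b / (a + b)) * sqnorm (latp B z - c)) := by
    intro z
    split_ifs with hcond
    · have hq0 : 0 ≤ sqnorm (latp B z - c) := sqnorm_nonneg _
      have h1 : 2 * π * (n : ℝ) * σ₀ ^ 2 < sqnorm (latp B z - c) := by
        have hlhs0 : 0 ≤ Real.sqrt (2 * π * (n:ℝ)) * σ₀ :=
          mul_nonneg (Real.sqrt_nonneg _) hσ₀.le
        have hsq := mul_self_lt_mul_self hlhs0 hcond
        nlinarith [Real.mul_self_sqrt hq0,
          Real.mul_self_sqrt (by positivity : (0:ℝ) ≤ 2 * π * (n:ℝ))]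
      rw [hEdef, harg, ← Real.exp_add, Real.exp_le_exp]
      have e1 : -(sqnorm (latp B z - c)) / (2 * σ₀ ^ 2)
          = -(sqnorm (latp B z - c)) / (2 * (2 * π * σ₀ ^ 2))
            - sqnorm (latp B z - c) * ((2 * π - 1) / (2 * (2 * π * σ₀ ^ 2))) := by
        field_simp
        ring
      have e2 : (2 * π * (n : ℝ) * σ₀ ^ 2) * ((2 * π - 1) / (2 * (2 * π * σ₀ ^ 2)))
          = (n : ℝ) * (π - 1 / 2) := by
        field_simp
      have e3 : (2 * π * (n : ℝ) * σ₀ ^ 2) * ((2 * π - 1) / (2 * (2 * π * σ₀ ^ 2)))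
          ≤ sqnorm (latp B z - c) * ((2 * π - 1) / (2 * (2 * π * σ₀ ^ 2))) :=
        mul_le_mul_of_nonneg_right h1.le hkpos
      linarith
    · positivity
  have hsumTail : Summable (fun z : Fin n → ℤ =>
      if Real.sqrt (2 * π * n) * σ₀ < Real.sqrt (sqnorm (latp B z - c)) then
        Real.exp (-(sqnorm (latp B z - c)) / (2 * σ₀ ^ 2)) else 0) := by
    refine Summable.of_nonneg_of_le (fun z => ?_) (fun z => ?_) (hSsum c)
    · split_ifs
      · exact (Real.exp_pos _).le
      · exact le_rfl
    · split_ifs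
      · exact le_rfl
      · exact (Real.exp_pos _).le
  have hTail : (∑' z : Fin n → ℤ,
      if Real.sqrt (2 * π * n) * σ₀ < Real.sqrt (sqnorm (latp B z - c)) then
        Real.exp (-(sqnorm (latp B z - c)) / (2 * σ₀ ^ 2)) else 0)
      ≤ E * ((1 + ε) / W * Real.sqrt (2 * π) ^ n) := by
    calc (∑' z : Fin n → ℤ,
        if Real.sqrt (2 * π * n) * σ₀ < Real.sqrt (sqnorm (latp B z - c)) then
          Real.exp (-(sqnorm (latp B z - c)) / (2 * σ₀ ^ 2)) else 0)
        ≤ ∑' z : Fin n → ℤ, E * Real.exp (-(a * b / (a + b)) * sqnorm (latp B z - c)) :=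
          Summable.tsum_le_tsum htermtail hsumTail (hsumBig.mul_left E)
      _ = E * ∑' z : Fin n → ℤ, Real.exp (-(a * b / (a + b)) * sqnorm (latp B z - c)) :=
          tsum_mul_left
      _ ≤ E * ((1 + ε) / W * Real.sqrt (2 * π) ^ n) :=
          mul_le_mul_of_nonneg_left hSbig (by rw [hEdef]; exact (Real.exp_pos _).le)
  -- numerics
  have hhalf : Real.exp (1 / 2 - π) * Real.sqrt (2 * π) < 1 / 2 := by
    have s1 : Real.sqrt (2 * π) < 2.51 := by
      rw [Real.sqrt_lt' (by norm_num : (0:ℝ) < 2.51)]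
      nlinarith [pi_lt_d2]
    have s2 : (5.02:ℝ) < Real.exp (π - 1 / 2) := by
      have h264 : (2.64:ℝ) ≤ π - 1 / 2 := by nlinarith [pi_gt_d2]
      have h132 : (2.32:ℝ) ≤ Real.exp 1.32 := by
        have := Real.add_one_le_exp (1.32:ℝ)
        linarith
      calc (5.02:ℝ) < 2.32 ^ 2 := by norm_num
        _ ≤ Real.exp 1.32 ^ 2 := by
            exact pow_le_pow_left₀ (by norm_num) h132 2
        _ = Real.exp 2.64 := by
            rw [sq, ← Real.exp_add]; norm_num
        _ ≤ Real.exp (π - 1 / 2) := Real.exp_le_exp.mpr h264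
    have hexp : Real.exp (1 / 2 - π) = (Real.exp (π - 1 / 2))⁻¹ := by
      rw [← Real.exp_neg]
      congr 1
      ring
    have h1 : Real.exp (1 / 2 - π) < (5.02:ℝ)⁻¹ := by
      rw [hexp]
      exact inv_strictAnti₀ (by norm_num) s2
    calc Real.exp (1 / 2 - π) * Real.sqrt (2 * π)
        < (5.02:ℝ)⁻¹ * 2.51 :=
          mul_lt_mul'' h1 s1 (Real.exp_pos _).le (Real.sqrt_nonneg _)
      _ = 1 / 2 := by norm_num
  have hEfac : E * Real.sqrt (2 * π) ^ n = (Real.exp (1 / 2 - π) * Real.sqrt (2 * π)) ^ n := by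
    rw [hEdef, Real.exp_nat_mul, mul_pow]
  have hMsup : 0 < (1 + ε) / W := div_pos (by linarith) hW
  have hpow : (Real.exp (1 / 2 - π) * Real.sqrt (2 * π)) ^ n < (1 / 2 : ℝ) ^ n :=
    pow_lt_pow_left₀ hhalf (by positivity) hn.ne'
  have hTail2 : (∑' z : Fin n → ℤ,
      if Real.sqrt (2 * π * n) * σ₀ < Real.sqrt (sqnorm (latp B z - c)) then
        Real.exp (-(sqnorm (latp B z - c)) / (2 * σ₀ ^ 2)) else 0)
      < (1 / 2 : ℝ) ^ n * ((1 + ε) / W) := by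
    calc (∑' z : Fin n → ℤ,
        if Real.sqrt (2 * π * n) * σ₀ < Real.sqrt (sqnorm (latp B z - c)) then
          Real.exp (-(sqnorm (latp B z - c)) / (2 * σ₀ ^ 2)) else 0)
        ≤ E * ((1 + ε) / W * Real.sqrt (2 * π) ^ n) := hTail
      _ = (E * Real.sqrt (2 * π) ^ n) * ((1 + ε) / W) := by ring
      _ = (Real.exp (1 / 2 - π) * Real.sqrt (2 * π)) ^ n * ((1 + ε) / W) := by rw [hEfac]
      _ < (1 / 2 : ℝ) ^ n * ((1 + ε) / W) := mul_lt_mul_of_pos_right hpow hMsup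
  -- final assembly
  have hd : 0 < (1 - ε) / W := div_pos (by linarith) hW
  have hSc : 0 < S c := lt_of_lt_of_le hd hlo
  have hgoalLHS : (∑' z : Fin n → ℤ,
        if Real.sqrt (2 * π * n) * σ₀ < Real.sqrt (sqnorm (latp B z - c)) then
          cosetGauss B σ₀ c z
        else 0)
      = (∑' z : Fin n → ℤ,
          if Real.sqrt (2 * π * n) * σ₀ < Real.sqrt (sqnorm (latp B z - c)) then
            Real.exp (-(sqnorm (latp B z - c)) / (2 * σ₀ ^ 2)) else 0) / S c := by
    rw [← tsum_div_const]
    refine tsum_congr fun z => ?_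
    by_cases hcond : Real.sqrt (2 * π * n) * σ₀ < Real.sqrt (sqnorm (latp B z - c))
    · rw [if_pos hcond, if_pos hcond]
      rfl
    · rw [if_neg hcond, if_neg hcond, zero_div]
  rw [hgoalLHS]
  have hTnn : 0 ≤ (∑' z : Fin n → ℤ,
      if Real.sqrt (2 * π * n) * σ₀ < Real.sqrt (sqnorm (latp B z - c)) then
        Real.exp (-(sqnorm (latp B z - c)) / (2 * σ₀ ^ 2)) else 0) := by
    refine tsum_nonneg fun z => ?_
    split_ifs
    · exact (Real.exp_pos _).le
    · exact le_rfl
  have h2n : ((1:ℝ) / 2) ^ n = (2:ℝ) ^ (-(n : ℝ)) := by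
    rw [Real.rpow_neg (by norm_num : (0:ℝ) ≤ 2), Real.rpow_natCast 2 n, one_div, inv_pow]
  calc (∑' z : Fin n → ℤ,
        if Real.sqrt (2 * π * n) * σ₀ < Real.sqrt (sqnorm (latp B z - c)) then
          Real.exp (-(sqnorm (latp B z - c)) / (2 * σ₀ ^ 2)) else 0) / S c
      ≤ (∑' z : Fin n → ℤ,
        if Real.sqrt (2 * π * n) * σ₀ < Real.sqrt (sqnorm (latp B z - c)) then
          Real.exp (-(sqnorm (latp B z - c)) / (2 * σ₀ ^ 2)) else 0) / ((1 - ε) / W) := by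
        gcongr
    _ < ((1 / 2 : ℝ) ^ n * ((1 + ε) / W)) / ((1 - ε) / W) :=
        (div_lt_div_iff_of_pos_right hd).mpr hTail2
    _ = ((1 + ε) / (1 - ε)) * ((1 / 2 : ℝ) ^ n) := by
        have hWne : W ≠ 0 := ne_of_gt hW
        have h1ε : (1:ℝ) - ε ≠ 0 := ne_of_gt (by linarith)
        field_simp
    _ = ((1 + ε) / (1 - ε)) * 2 ^ (-(n : ℝ)) := by rw [h2n]


end
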